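/- Let γ > 1 and α = 2/(γ−1), and let ⃐φ, ⃑φ be the backward/forward auxiliary wave-curve functions. Given left state (z̄, h̄) and right state (z, h) with z̄, z > 0, the function b ↦ z̄·⃐φ(b) + z·⃐φ(b z̄ / z) is strictly increasing on (0,∞), ranges over (−(z̄+z), +∞), and hence the equation z̄ ⃐φ(b) + z ⃐φ(b z̄/z) = h̄ − h has a unique positive root b if and only if h − h̄ < z + z̄ (the no-vacuum condition). -/

import Mathlib

open Set Filter Real

/-- Unique solvability of the Riemann problem of the p-system without vacuum:
the function `b ↦ z̄ ⃐φ(b) + z ⃐φ(b z̄ / z)` is strictly increasing on `(0,∞)` with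
range `(-(z̄+z), ∞)`, so the wave equation has a unique positive root iff
`h - h̄ < z + z̄`. -/
theorem riemann_problem_no_vacuum (γ : ℝ) (hγ : 1 < γ) (α : ℝ)
    (hα : α = 2 / (γ - 1)) (φb : ℝ → ℝ)
    (hb₁ : ∀ x : ℝ, 0 < x → x ≤ 1 → φb x = x - 1)
    (hb₂ : ∀ x : ℝ, 1 < x →
        φb x = (γ - 1) / (2 * Real.sqrt γ) *
          Real.sqrt ((1 - x ^ (-1 / α)) * (x ^ (γ / α) - 1)))
    (zb z hb h : ℝ) (hzb : 0 < zb) (hz : 0 < z) :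
    StrictMonoOn (fun b => zb * φb b + z * φb (b * zb / z)) (Ioi 0) ∧
    (fun b => zb * φb b + z * φb (b * zb / z)) '' Ioi 0 = Ioi (-(zb + z)) ∧
    ((∃! b : ℝ, 0 < b ∧ zb * φb b + z * φb (b * zb / z) = hb - h) ↔
      h - hb < z + zb) := by
  set f : ℝ → ℝ := fun b => zb * φb b + z * φb (b * zb / z) with hf
  have hγ1 : (0:ℝ) < γ - 1 := by linarith
  have hγ0 : (0:ℝ) < γ := by linarith
  have hαpos : 0 < α := by rw [hα]; positivity
  have hpneg : -1 / α < 0 := by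
    apply div_neg_of_neg_of_pos (by norm_num) hαpos
  have hqpos : 0 < γ / α := div_pos hγ0 hαpos
  have hsγ : 0 < Real.sqrt γ := Real.sqrt_pos.mpr hγ0
  set c : ℝ := (γ - 1) / (2 * Real.sqrt γ) with hcdef
  have hc : 0 < c := by positivity
  set g : ℝ → ℝ := fun x => c * Real.sqrt ((1 - x ^ (-1 / α)) * (x ^ (γ / α) - 1))
    with hgdef
  -- factor positivity for x > 1
  have hA : ∀ x : ℝ, 1 < x → 0 < 1 - x ^ (-1 / α) := fun x hx =>
    sub_pos.mpr (Real.rpow_lt_one_of_one_lt_of_neg hx hpneg)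
  have hB : ∀ x : ℝ, 1 < x → 0 < x ^ (γ / α) - 1 := fun x hx =>
    sub_pos.mpr ((Real.one_lt_rpow_iff_of_pos (by linarith)).mpr (Or.inl ⟨hx, hqpos⟩))
  have hgpos : ∀ x : ℝ, 1 < x → 0 < g x := fun x hx =>
    mul_pos hc (Real.sqrt_pos.mpr (mul_pos (hA x hx) (hB x hx)))
  have hφg : ∀ x : ℝ, 1 < x → φb x = g x := fun x hx => hb₂ x hx
  have hpos : ∀ x : ℝ, 1 < x → 0 < φb x := fun x hx => (hφg x hx) ▸ hgpos x hx
  -- strict monotonicity of φb on Ioi 0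
  have hφmono : StrictMonoOn φb (Ioi 0) := by
    intro x hx y hy hxy
    simp only [mem_Ioi] at hx hy
    rcases le_or_gt y 1 with h1 | h1
    · rw [hb₁ x hx (le_of_lt (lt_of_lt_of_le hxy h1)), hb₁ y hy h1]; linarith
    · rcases le_or_gt x 1 with h2 | h2
      · rw [hb₁ x hx h2]
        have := hpos y h1
        linarith
      · rw [hφg x h2, hφg y h1]
        have hAB : (1 - x ^ (-1 / α)) * (x ^ (γ / α) - 1) <
            (1 - y ^ (-1 / α)) * (y ^ (γ / α) - 1) := by
          have h3 : y ^ (-1 / α) < x ^ (-1 / α) :=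
            Real.rpow_lt_rpow_of_neg (by linarith) hxy hpneg
          have h4 : x ^ (γ / α) < y ^ (γ / α) :=
            Real.rpow_lt_rpow (by linarith) hxy hqpos
          have := hA x h2; have := hB x h2
          nlinarith
        exact mul_lt_mul_of_pos_left
          (Real.sqrt_lt_sqrt (le_of_lt (mul_pos (hA x h2) (hB x h2))) hAB) hc
  -- φb > -1 on Ioi 0
  have hφgt : ∀ x : ℝ, 0 < x → -1 < φb x := by
    intro x hx
    rcases le_or_gt x 1 with h1 | h1
    · rw [hb₁ x hx h1]; linarith
    · linarith [hpos x h1]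
  -- continuity of g at positive points
  have hgcont : ∀ x : ℝ, 0 < x → ContinuousAt g x := by
    intro x hx
    apply ContinuousAt.mul continuousAt_const
    apply Real.continuous_sqrt.continuousAt.comp
    apply ContinuousAt.mul
    · exact ContinuousAt.sub continuousAt_const
        (Real.continuousAt_rpow_const x _ (Or.inl hx.ne'))
    · exact ContinuousAt.sub
        (Real.continuousAt_rpow_const x _ (Or.inl hx.ne')) continuousAt_const
  -- continuity of φb on Ioi 0
  have hφcont : ContinuousOn φb (Ioi 0) := by
    intro x hx
    simp only [mem_Ioi] at hx
    rcases lt_trichotomy x 1 with h1 | h1 | h1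
    · apply ContinuousAt.continuousWithinAt
      have hev : (fun y : ℝ => y - 1) =ᶠ[nhds x] φb := by
        filter_upwards [Ioo_mem_nhds hx h1] with y hy
        exact (hb₁ y hy.1 hy.2.le).symm
      exact (continuousAt_id.sub continuousAt_const).congr hev
    · subst h1
      have h10 : φb 1 = 0 := by rw [hb₁ 1 one_pos le_rfl]; ring
      have hsub : Ioi (0:ℝ) ⊆ Ioc 0 1 ∪ Ici 1 := by
        intro t ht
        rcases le_or_gt t 1 with h | h
        · exact Or.inl ⟨ht, h⟩
        · exact Or.inr h.le
      apply ContinuousWithinAt.mono _ hsub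
      apply ContinuousWithinAt.union
      · have : ContinuousWithinAt (fun y : ℝ => y - 1) (Ioc 0 1) 1 :=
          (continuousAt_id.sub continuousAt_const).continuousWithinAt
        apply this.congr
        · intro y hy; exact hb₁ y hy.1 hy.2
        · rw [h10]; norm_num
      · have hg1 : g 1 = 0 := by
          simp [hgdef, Real.one_rpow]
        have : ContinuousWithinAt g (Ici 1) 1 :=
          (hgcont 1 one_pos).continuousWithinAt
        apply this.congr
        · intro y hy
          rcases eq_or_lt_of_le (mem_Ici.mp hy) with h | h
          · rw [← h, h10, hg1]
          · exact hφg y h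
        · rw [h10, hg1]
    · apply ContinuousAt.continuousWithinAt
      have hev : g =ᶠ[nhds x] φb := by
        filter_upwards [Ioi_mem_nhds h1] with y hy
        exact (hφg y hy).symm
      exact (hgcont x (by linarith)).congr hev
  -- continuity of f on Ioi 0
  have hmaps : ∀ b : ℝ, 0 < b → 0 < b * zb / z := fun b hbb => by positivity
  have hfcont : ContinuousOn f (Ioi 0) := by
    apply ContinuousOn.add
    · exact continuousOn_const.mul hφcont
    · apply continuousOn_const.mul
      apply hφcont.comp
      · exact ((continuous_id.mul continuous_const).div_const z).continuousOn
      · intro b hbb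
        exact mem_Ioi.mpr (hmaps b (mem_Ioi.mp hbb))
  -- strict monotonicity of f
  have hfmono : StrictMonoOn f (Ioi 0) := by
    intro x hx y hy hxy
    simp only [mem_Ioi] at hx hy
    have h1 : φb x < φb y := hφmono (mem_Ioi.mpr hx) (mem_Ioi.mpr hy) hxy
    have h2 : φb (x * zb / z) < φb (y * zb / z) := by
      apply hφmono (mem_Ioi.mpr (hmaps x hx)) (mem_Ioi.mpr (hmaps y hy))
      gcongr
    have := mul_lt_mul_of_pos_left h1 hzb
    have := mul_lt_mul_of_pos_left h2 hz
    simp only [hf]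
    linarith
  -- small values: closed form
  have hsmall : ∀ b : ℝ, 0 < b → b ≤ 1 → b * zb / z ≤ 1 →
      f b = 2 * zb * b - (zb + z) := by
    intro b hb0 hb1 hb2'
    simp only [hf]
    rw [hb₁ b hb0 hb1, hb₁ (b * zb / z) (hmaps b hb0) hb2']
    field_simp
    ring
  -- lower bound: f b > -(zb+z)
  have hlb : ∀ b : ℝ, 0 < b → -(zb + z) < f b := by
    intro b hb0
    have h1 := hφgt b hb0
    have h2 := hφgt (b * zb / z) (hmaps b hb0)
    simp only [hf]
    nlinarith
  -- tendsto atTop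
  have hsqrtTop : Tendsto Real.sqrt atTop atTop := by
    have := tendsto_rpow_atTop (by norm_num : (0:ℝ) < 1/2)
    exact this.congr fun x => (Real.sqrt_eq_rpow x).symm
  have hφtop : Tendsto φb atTop atTop := by
    set k : ℝ := 1 - (2:ℝ) ^ (-1 / α) with hk
    have hk0 : 0 < k := hA 2 one_lt_two
    have hlow : Tendsto (fun x : ℝ => c * Real.sqrt (k * (x ^ (γ / α) - 1)))
        atTop atTop := by
      apply Tendsto.const_mul_atTop hc
      apply hsqrtTop.comp
      apply Tendsto.const_mul_atTop hk0
      exact tendsto_atTop_add_const_right _ (-1) (tendsto_rpow_atTop hqpos) |>.congr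
        fun x => by ring
    apply tendsto_atTop_mono' _ _ hlow
    filter_upwards [eventually_ge_atTop (2:ℝ)] with x hx
    have hx1 : 1 < x := by linarith
    rw [hφg x hx1]
    apply mul_le_mul_of_nonneg_left _ hc.le
    apply Real.sqrt_le_sqrt
    have h3 : x ^ (-1 / α) ≤ (2:ℝ) ^ (-1 / α) :=
      Real.rpow_le_rpow_of_nonpos two_pos hx hpneg.le
    have := hB x hx1
    nlinarith
  have hftop : Tendsto f atTop atTop := by
    apply Tendsto.atTop_add_atTop
    · exact Tendsto.const_mul_atTop hzb hφtop
    · apply Tendsto.const_mul_atTop hz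
      apply hφtop.comp
      exact Tendsto.atTop_div_const hz (Tendsto.atTop_mul_const hzb tendsto_id)
  -- image
  have himage : f '' Ioi 0 = Ioi (-(zb + z)) := by
    ext y
    constructor
    · rintro ⟨b, hb, rfl⟩
      exact mem_Ioi.mpr (hlb b (mem_Ioi.mp hb))
    · intro hy
      have hy' : -(zb + z) < y := mem_Ioi.mp hy
      -- small point
      set b₀ : ℝ := min 1 (min (z / zb) ((y + zb + z) / (2 * zb))) with hb₀def
      have hb₀pos : 0 < b₀ := by
        apply lt_min one_pos
        apply lt_min (by positivity)
        have : 0 < y + zb + z := by linarith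
        positivity
      have hb₀1 : b₀ ≤ 1 := min_le_left _ _
      have hb₀2 : b₀ * zb / z ≤ 1 := by
        have : b₀ ≤ z / zb := le_trans (min_le_right _ _) (min_le_left _ _)
        rw [div_le_one hz]
        calc b₀ * zb ≤ (z / zb) * zb := by nlinarith
          _ = z := by field_simp
      have hfb₀ : f b₀ ≤ y := by
        rw [hsmall b₀ hb₀pos hb₀1 hb₀2]
        have : b₀ ≤ (y + zb + z) / (2 * zb) :=
          le_trans (min_le_right _ _) (min_le_right _ _)
        have h2 : 2 * zb * b₀ ≤ y + zb + z := by
          rw [le_div_iff₀ (by positivity)] at this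
          linarith
        linarith
      -- large point
      obtain ⟨B, hBy, hBb⟩ :=
        ((hftop.eventually_ge_atTop y).and (eventually_ge_atTop b₀)).exists
      have hsub : Icc b₀ B ⊆ Ioi 0 := fun t ht => lt_of_lt_of_le hb₀pos ht.1
      obtain ⟨b, hbmem, hbeq⟩ :=
        intermediate_value_Icc hBb (hfcont.mono hsub) ⟨hfb₀, hBy⟩
      exact ⟨b, hsub hbmem, hbeq⟩
  refine ⟨hfmono, himage, ?_⟩
  constructor
  · rintro ⟨b, ⟨hbpos, heq⟩, -⟩
    have : hb - h ∈ Ioi (-(zb + z)) := himage ▸ ⟨b, mem_Ioi.mpr hbpos, heq⟩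
    simp only [mem_Ioi] at this
    linarith
  · intro hlt
    have : hb - h ∈ Ioi (-(zb + z)) := by simp only [mem_Ioi]; linarith
    rw [← himage] at this
    obtain ⟨b, hbI, heq⟩ := this
    refine ⟨b, ⟨mem_Ioi.mp hbI, heq⟩, ?_⟩
    rintro b' ⟨hb'pos, heq'⟩
    exact hfmono.injOn (mem_Ioi.mpr hb'pos) hbI (heq'.trans heq.symm)
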